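/- Let p be a prime and let a ≥ b ≥ 1 be integers. If G ≅ C_{p^a} × C_{p^b}, then the number of maximal cyclic subgroups of G equals p^{b-1}((a-b)(p-1) + p + 1). -/

import Mathlib

def IsMaximalCyclic {G : Type*} [Group G] (H : Subgroup G) : Prop :=
  IsCyclic H ∧ ∀ K : Subgroup G, IsCyclic K → H ≤ K → H = K

open Subgroup

section Generic

variable {M : Type*} [Group M]

lemma isCyclic_zpowers (g : M) : IsCyclic (zpowers g) := by
  refine ⟨⟨g, mem_zpowers g⟩, ?_⟩
  rintro ⟨x, n, rfl⟩
  exact ⟨n, Subtype.ext (by simp)⟩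

lemma exists_zpowers_eq {K : Subgroup M} (h : IsCyclic K) : ∃ g : M, K = zpowers g := by
  obtain ⟨⟨g, hg⟩, hgen⟩ := h
  refine ⟨g, le_antisymm ?_ (zpowers_le.2 hg)⟩
  intro x hx
  obtain ⟨n, hn⟩ := hgen ⟨x, hx⟩
  exact ⟨n, congrArg Subtype.val hn⟩

variable [Fintype M] {p : ℕ}

lemma exists_pow_eq_of_mem_zpowers {g h : M} (hm : h ∈ zpowers g) : ∃ n : ℕ, g ^ n = h := by
  rw [← mem_powers_iff_mem_zpowers] at hm
  exact hm

lemma pow_coprime_generates {g : M} {n : ℕ} (hcop : Nat.Coprime n (orderOf g)) :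
    zpowers (g ^ n) = zpowers g := by
  refine le_antisymm (zpowers_le.2 (pow_mem (mem_zpowers g) n)) ?_
  rcases le_or_gt (orderOf g) 1 with h1 | h1
  · interval_cases h : orderOf g
    · exact absurd h (orderOf_pos g).ne'
    · rw [orderOf_eq_one_iff.mp h, one_pow]
  · obtain ⟨m, -, hm⟩ := Nat.exists_mul_mod_eq_one_of_coprime hcop h1
    have hg : (g ^ n) ^ m = g := by
      rw [← pow_mul, ← pow_mod_orderOf, hm, pow_one]
    exact zpowers_le.2 (by simpa only [hg] using pow_mem (mem_zpowers (g ^ n)) m)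

lemma zpowers_pow_eq (hp : p.Prime) (hord : ∀ g : M, ∃ k, orderOf g = p ^ k)
    {g : M} {n : ℕ} (hn : ¬ p ∣ n) : zpowers (g ^ n) = zpowers g := by
  obtain ⟨k, hk⟩ := hord g
  exact pow_coprime_generates (by rw [hk]; exact (hp.coprime_iff_not_dvd.2 hn).symm.pow_right k)

lemma isMaximalCyclic_zpowers (hp : p.Prime) (hord : ∀ g : M, ∃ k, orderOf g = p ^ k)
    {g : M} (hg : ¬ ∃ x, x ^ p = g) : IsMaximalCyclic (zpowers g) := by
  refine ⟨_root_.isCyclic_zpowers g, fun K hK hle => ?_⟩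
  obtain ⟨h, rfl⟩ := exists_zpowers_eq hK
  obtain ⟨n, rfl⟩ := exists_pow_eq_of_mem_zpowers (hle (mem_zpowers g))
  by_cases hpn : p ∣ n
  · obtain ⟨m, rfl⟩ := hpn
    exact absurd ⟨h ^ m, by rw [← pow_mul, mul_comm]⟩ hg
  · exact zpowers_pow_eq hp hord hpn

lemma maxCyclic_set_eq (hp : p.Prime) (hord : ∀ g : M, ∃ k, orderOf g = p ^ k) [Nontrivial M] :
    {H : Subgroup M | IsMaximalCyclic H} = (fun g => zpowers g) '' {g : M | ¬ ∃ x, x ^ p = g} := by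
  ext H
  constructor
  · rintro ⟨hcyc, hmax⟩
    obtain ⟨g, rfl⟩ := exists_zpowers_eq hcyc
    by_cases hg : ∃ x, x ^ p = g
    · obtain ⟨x, rfl⟩ := hg
      have h1 : zpowers (x ^ p) = zpowers x :=
        hmax _ (_root_.isCyclic_zpowers x) (zpowers_le.2 (pow_mem (mem_zpowers x) p))
      exfalso
      obtain ⟨n, hn⟩ := exists_pow_eq_of_mem_zpowers (h1 ▸ mem_zpowers x)
      have hx1 : x = 1 := by
        rcases Nat.eq_zero_or_pos n with rfl | hnpos
        · simpa using hn.symm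
        · have hpow : x ^ (p * n) = x := by rw [pow_mul, hn]
          have h2 : x ^ (p * n - 1) = 1 := by
            have hpn1 : 1 ≤ p * n := Nat.mul_pos hp.pos hnpos
            have : x ^ (p * n - 1) * x = x := by
              rw [← pow_succ, Nat.sub_add_cancel hpn1, hpow]
            exact mul_right_cancel (by rw [this, one_mul])
          have hdvd : orderOf x ∣ p * n - 1 := orderOf_dvd_of_pow_eq_one h2
          obtain ⟨k, hk⟩ := hord x
          rcases Nat.eq_zero_or_pos k with rfl | hkpos
          · rw [pow_zero] at hk; exact orderOf_eq_one_iff.mp hk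
          · exfalso
            have hpd : p ∣ p * n - 1 := dvd_trans (dvd_pow_self p hkpos.ne') (hk ▸ hdvd)
            have h3 : p ∣ p * n - (p * n - 1) := Nat.dvd_sub (Dvd.intro n rfl) hpd
            rw [Nat.sub_sub_self (Nat.mul_pos hp.pos hnpos)] at h3
            exact hp.one_lt.ne' (Nat.dvd_one.mp h3)
      exfalso
      obtain ⟨y, hy⟩ := exists_ne (1 : M)
      have h4 : zpowers (x ^ p) = zpowers y := by
        refine hmax _ (_root_.isCyclic_zpowers y) ?_
        rw [hx1, one_pow, zpowers_one_eq_bot]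
        exact bot_le
      have : y ∈ zpowers (x ^ p) := h4 ▸ mem_zpowers y
      rw [hx1, one_pow, zpowers_one_eq_bot, mem_bot] at this
      exact hy this
    · exact ⟨g, hg, rfl⟩
  · rintro ⟨g, hg, rfl⟩
    exact isMaximalCyclic_zpowers hp hord hg

end Generic
section Transport

variable {G H : Type*} [Group G] [Group H]

lemma isMaximalCyclic_map (e : G ≃* H) {K : Subgroup G} (hK : IsMaximalCyclic K) :
    IsMaximalCyclic (K.map e.toMonoidHom) := by
  refine ⟨isCyclic_of_surjective _ (e.toMonoidHom.subgroupMap_surjective K)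
    (hH := hK.1), fun K' hK' hle => ?_⟩
  have hcyc : IsCyclic (K'.map e.symm.toMonoidHom) :=
    isCyclic_of_surjective _ (e.symm.toMonoidHom.subgroupMap_surjective K') (hH := hK')
  have h1 : K = K'.map e.symm.toMonoidHom := by
    refine hK.2 _ hcyc ?_
    intro x hx
    exact ⟨e x, hle ⟨x, hx, rfl⟩, by simp⟩
  rw [h1, Subgroup.map_map]
  convert Subgroup.map_id K'
  ext x
  simp

lemma ncard_maxCyclic_congr (e : G ≃* H) :
    {K : Subgroup G | IsMaximalCyclic K}.ncard = {K : Subgroup H | IsMaximalCyclic K}.ncard := by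
  have himg : {K : Subgroup H | IsMaximalCyclic K}
      = (Subgroup.map e.toMonoidHom) '' {K : Subgroup G | IsMaximalCyclic K} := by
    ext K'
    constructor
    · intro hK'
      refine ⟨K'.map e.symm.toMonoidHom, isMaximalCyclic_map e.symm hK', ?_⟩
      rw [Subgroup.map_map]
      convert Subgroup.map_id K'
      ext x; simp
    · rintro ⟨K, hK, rfl⟩
      exact isMaximalCyclic_map e hK
  rw [himg, Set.ncard_image_of_injective _ (Subgroup.map_injective e.injective)]

end Transport
section ZModHelpers

variable {p : ℕ}

-- valuation transfer
lemma padic_transfer (hp : p.Prime) {v m r : ℕ} (hm : m ≠ 0) (hv : padicValNat p m = v)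
    (hr : r ≠ 0) (hmod : r ≡ m [MOD p ^ (v + 1)]) : padicValNat p r = v := by
  haveI : Fact p.Prime := ⟨hp⟩
  have hdvd_v : p ^ v ∣ r := by
    have h1 : r ≡ m [MOD p ^ v] := hmod.of_dvd (pow_dvd_pow p (Nat.le_succ v))
    have h2 : p ^ v ∣ m := hv ▸ pow_padicValNat_dvd
    rw [← Nat.modEq_zero_iff_dvd] at h2 ⊢
    exact h1.trans h2
  have hnot : ¬ p ^ (v + 1) ∣ r := by
    intro hd
    have h1 : p ^ (v + 1) ∣ m := by
      rw [← Nat.modEq_zero_iff_dvd] at hd ⊢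
      exact hmod.symm.trans hd
    rw [padicValNat_dvd_iff_le hm, hv] at h1
    omega
  refine le_antisymm ?_ ((padicValNat_dvd_iff_le hr).mp hdvd_v)
  by_contra hlt
  exact hnot ((padicValNat_dvd_iff_le hr).mpr (by omega))

lemma modEq_of_dvd_sub {N d : ℕ} [NeZero N] (hd : d ∣ N) {x x' : ZMod N}
    (h : ((d : ZMod N)) ∣ x' - x) : x'.val ≡ x.val [MOD d] := by
  obtain ⟨w, hw⟩ := h
  have hw' : x' = x + (d : ZMod N) * w := by rw [← hw]; ring
  have h1 : x'.val ≡ x.val + ((d : ZMod N) * w).val [MOD N] := by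
    rw [hw', ZMod.val_add]
    exact Nat.mod_modEq _ _
  have h2 : d ∣ ((d : ZMod N) * w).val := by
    have : (d : ZMod N) * w = ((d * w.val : ℕ) : ZMod N) := by
      push_cast
      rw [ZMod.natCast_rightInverse w]
    rw [this, ZMod.val_natCast]
    exact (Nat.dvd_mod_iff hd).2 (dvd_mul_right d w.val)
  have h3 : x'.val ≡ x.val + ((d : ZMod N) * w).val [MOD d] := h1.of_dvd hd
  calc x'.val ≡ x.val + ((d : ZMod N) * w).val [MOD d] := h3
    _ ≡ x.val + 0 [MOD d] := Nat.ModEq.add_left x.val (Nat.modEq_zero_iff_dvd.2 h2)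
    _ = x.val := by rw [Nat.add_zero]

lemma dvd_val_mul_right (hp : p.Prime) {N : ℕ} [NeZero N] (hpN : p ∣ N) {c : ZMod N}
    (hc : p ∣ c.val) (d : ZMod N) : p ∣ (d * c).val := by
  rw [ZMod.val_mul, Nat.dvd_mod_iff hpN]
  exact Dvd.dvd.mul_left hc _

lemma not_dvd_val_of_mul_eq_one (hp : p.Prime) {N : ℕ} [NeZero N] (hN1 : Fact (1 < N))
    (hpN : p ∣ N) {w x : ZMod N} (h : w * x = 1) : ¬ p ∣ w.val := by
  intro hd
  have h2 : p ∣ (x * w).val := dvd_val_mul_right hp hpN hd x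
  rw [mul_comm, h, ZMod.val_one] at h2
  exact hp.one_lt.ne' (Nat.dvd_one.mp h2)

end ZModHelpers
section Concrete

open Multiplicative

variable {p a b : ℕ}

/-- The concrete group. -/
@[reducible] def MM (p a b : ℕ) : Type :=
  Multiplicative (ZMod (p ^ a)) × Multiplicative (ZMod (p ^ b))

/-- Elements of the concrete group. -/
def Egen (x : ZMod (p ^ a)) (y : ZMod (p ^ b)) : MM p a b := (ofAdd x, ofAdd y)

lemma Egen_inj {x x' : ZMod (p ^ a)} {y y' : ZMod (p ^ b)} :
    (Egen x y : MM p a b) = Egen x' y' ↔ x = x' ∧ y = y' := by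
  simp [Egen, Prod.ext_iff]

lemma Egen_surj (g : MM p a b) : ∃ x y, g = Egen x y :=
  ⟨g.1.toAdd, g.2.toAdd, rfl⟩

lemma Egen_pow (x : ZMod (p ^ a)) (y : ZMod (p ^ b)) (n : ℕ) :
    (Egen x y : MM p a b) ^ n = Egen ((n : ZMod (p ^ a)) * x) ((n : ZMod (p ^ b)) * y) := by
  have h1 : (ofAdd x) ^ n = ofAdd ((n : ZMod (p ^ a)) * x) := by
    rw [← nsmul_eq_mul, ofAdd_nsmul]
  have h2 : (ofAdd y) ^ n = ofAdd ((n : ZMod (p ^ b)) * y) := by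
    rw [← nsmul_eq_mul, ofAdd_nsmul]
  simp [Egen, Prod.pow_def, h1, h2]

variable (hp : p.Prime) (hab : b ≤ a) (hb : 1 ≤ b)
include hp hab hb

lemma NeZa : NeZero (p ^ a) := ⟨(pow_pos hp.pos a).ne'⟩
lemma NeZb : NeZero (p ^ b) := ⟨(pow_pos hp.pos b).ne'⟩

lemma onelt_a : 1 < p ^ a := Nat.one_lt_pow (by omega) hp.one_lt
lemma onelt_b : 1 < p ^ b := Nat.one_lt_pow (by omega) hp.one_lt

lemma hord_MM : ∀ g : MM p a b, ∃ k, orderOf g = p ^ k := by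
  haveI := NeZa hp hab hb
  haveI := NeZb hp hab hb
  intro g
  have hcard : Fintype.card (MM p a b) = p ^ (a + b) := by
    rw [Fintype.card_prod, Fintype.card_multiplicative, Fintype.card_multiplicative,
      ZMod.card, ZMod.card, ← pow_add]
  have := orderOf_dvd_card (x := g)
  rw [hcard] at this
  obtain ⟨k, _, hk⟩ := (Nat.dvd_prime_pow hp).mp this
  exact ⟨k, hk⟩

/-- characterization of p-th powers -/
lemma pth_power_iff (x : ZMod (p ^ a)) (y : ZMod (p ^ b)) :
    (∃ z : MM p a b, z ^ p = Egen x y) ↔ (p ∣ x.val ∧ p ∣ y.val) := by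
  haveI := NeZa hp hab hb
  haveI := NeZb hp hab hb
  constructor
  · rintro ⟨z, hz⟩
    obtain ⟨u, w, rfl⟩ := Egen_surj z
    rw [Egen_pow, Egen_inj] at hz
    have hpa : p ∣ (p : ZMod (p ^ a)).val := by
      rw [ZMod.val_natCast]
      exact (Nat.dvd_mod_iff (dvd_pow_self p (by omega : a ≠ 0))).2 dvd_rfl
    have hpb : p ∣ (p : ZMod (p ^ b)).val := by
      rw [ZMod.val_natCast]
      exact (Nat.dvd_mod_iff (dvd_pow_self p (by omega : b ≠ 0))).2 dvd_rfl
    constructor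
    · rw [← hz.1, mul_comm]
      exact dvd_val_mul_right hp (dvd_pow_self p (by omega : a ≠ 0)) hpa u
    · rw [← hz.2, mul_comm]
      exact dvd_val_mul_right hp (dvd_pow_self p (by omega : b ≠ 0)) hpb w
  · rintro ⟨⟨u, hu⟩, ⟨w, hw⟩⟩
    refine ⟨Egen ((u : ℕ) : ZMod (p ^ a)) ((w : ℕ) : ZMod (p ^ b)), ?_⟩
    rw [Egen_pow, Egen_inj]
    constructor
    · have : ((p : ZMod (p ^ a))) * ((u : ℕ) : ZMod (p ^ a)) = ((p * u : ℕ) : ZMod (p ^ a)) := by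
        push_cast; ring
      rw [this, ← hu, ZMod.natCast_rightInverse x]
    · have : ((p : ZMod (p ^ b))) * ((w : ℕ) : ZMod (p ^ b)) = ((p * w : ℕ) : ZMod (p ^ b)) := by
        push_cast; ring
      rw [this, ← hw, ZMod.natCast_rightInverse y]

end Concrete
section Canon

variable {p a b : ℕ}

/-- canonical second-type generators -/
def Canon2 (p a b : ℕ) (x : ZMod (p ^ a)) : Prop :=
  p ∣ x.val ∧ x.val < p ^ (padicValNat p x.val + b)

variable (hp : p.Prime) (hab : b ≤ a) (hb : 1 ≤ b)
include hp hab hb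

lemma canon_unique {x x' : ZMod (p ^ a)} (hx : Canon2 p a b x) (hx' : Canon2 p a b x')
    {n : ℕ} (hn : n ≡ 1 [MOD p ^ b]) (h : (n : ZMod (p ^ a)) * x = x') : x = x' := by
  haveI : NeZero (p ^ a) := NeZa hp hab hb
  haveI : Fact p.Prime := ⟨hp⟩
  by_cases hx0 : x = 0
  · rw [← h, hx0, mul_zero]
  have hxval : x.val ≠ 0 := fun h0 => hx0 (by rwa [ZMod.val_eq_zero] at h0)
  set v := padicValNat p x.val with hv
  have hn1 : 1 ≤ n := by
    rcases Nat.eq_zero_or_pos n with rfl | h1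
    · exfalso
      have h3 := (Nat.modEq_iff_dvd' (by omega : 0 ≤ 1)).mp hn
      have h4 := Nat.le_of_dvd (by omega) h3
      have h2 := Nat.one_lt_pow (by omega : b ≠ 0) hp.one_lt
      omega
    · exact h1
  have hdvd : ((p ^ (v + b) : ℕ) : ZMod (p ^ a)) ∣ x' - x := by
    obtain ⟨s, hs⟩ := (Nat.modEq_iff_dvd' hn1).mp hn.symm
    obtain ⟨t, ht⟩ := pow_padicValNat_dvd (p := p) (n := x.val)
    refine ⟨((s * t : ℕ) : ZMod (p ^ a)), ?_⟩
    have hncast : (n : ZMod (p ^ a)) = 1 + ((p ^ b * s : ℕ) : ZMod (p ^ a)) := by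
      have : n = 1 + p ^ b * s := by omega
      rw [this]; push_cast; ring
    calc x' - x = ((p ^ b * s : ℕ) : ZMod (p ^ a)) * ((x.val : ℕ) : ZMod (p ^ a)) := by
          rw [← h, hncast]
          conv_lhs => rw [← ZMod.natCast_rightInverse x]
          ring
      _ = ((p ^ b * s * x.val : ℕ) : ZMod (p ^ a)) := by push_cast; ring
      _ = ((p ^ (v + b) * (s * t) : ℕ) : ZMod (p ^ a)) := by
          rw [ht]; congr 1; rw [pow_add]; ring
      _ = ((p ^ (v + b) : ℕ) : ZMod (p ^ a)) * ((s * t : ℕ) : ZMod (p ^ a)) := by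
          push_cast; ring
  rcases le_or_gt a (v + b) with hcase | hcase
  · have hz : ((p ^ (v + b) : ℕ) : ZMod (p ^ a)) = 0 := by
      rw [ZMod.natCast_eq_zero_iff]
      exact pow_dvd_pow p hcase
    rw [hz] at hdvd
    obtain ⟨w, hw⟩ := hdvd
    have : x' - x = 0 := by rw [hw, zero_mul]
    exact (sub_eq_zero.mp this).symm
  · have hmod : x'.val ≡ x.val [MOD p ^ (v + b)] :=
      modEq_of_dvd_sub (pow_dvd_pow p hcase.le) hdvd
    have hxlt : x.val < p ^ (v + b) := hx.2
    have hx'0 : x'.val ≠ 0 := by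
      intro h0
      have h1 : x.val ≡ 0 [MOD p ^ (v + b)] := (h0 ▸ hmod).symm
      have h2 : p ^ (v + b) ∣ x.val := Nat.modEq_zero_iff_dvd.mp h1
      have := Nat.le_of_dvd (by omega) h2
      omega
    have hv' : padicValNat p x'.val = v := by
      refine padic_transfer hp hxval rfl hx'0 ?_
      exact hmod.of_dvd (pow_dvd_pow p (by omega))
    have hx'lt : x'.val < p ^ (v + b) := by
      have := hx'.2
      rwa [hv'] at this
    have heq : x'.val = x.val := by
      have h1 := hmod
      unfold Nat.ModEq at h1
      rwa [Nat.mod_eq_of_lt hx'lt, Nat.mod_eq_of_lt hxlt] at h1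
    exact (ZMod.val_injective _ heq).symm

lemma exists_canon {x₁ : ZMod (p ^ a)} (hx₁ : p ∣ x₁.val) :
    ∃ (r : ZMod (p ^ a)) (n : ℕ), Canon2 p a b r ∧ ¬ p ∣ n ∧ n ≡ 1 [MOD p ^ b] ∧
      (n : ZMod (p ^ a)) * x₁ = r := by
  haveI : NeZero (p ^ a) := NeZa hp hab hb
  haveI : Fact p.Prime := ⟨hp⟩
  by_cases h0 : x₁ = 0
  · refine ⟨0, 1, ⟨?_, ?_⟩, fun hd => hp.one_lt.ne' (Nat.dvd_one.mp hd), Nat.ModEq.refl 1, ?_⟩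
    · simp
    · simp only [ZMod.val_zero, padicValNat.zero, zero_add]
      exact pow_pos hp.pos b
    · rw [h0, mul_zero]
  · have hxval : x₁.val ≠ 0 := fun hh => h0 (by rwa [ZMod.val_eq_zero] at hh)
    set v := padicValNat p x₁.val with hv
    rcases le_or_gt a (v + b) with hcase | hcase
    · refine ⟨x₁, 1, ⟨hx₁, lt_of_lt_of_le (ZMod.val_lt x₁)
        (Nat.pow_le_pow_right hp.one_le hcase)⟩,
        fun hd => hp.one_lt.ne' (Nat.dvd_one.mp hd), Nat.ModEq.refl 1, by simp⟩
    · obtain ⟨u, hu⟩ := pow_padicValNat_dvd (p := p) (n := x₁.val)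
      have hpu : ¬ p ∣ u := by
        rintro ⟨w, hw⟩
        have hdd : p ^ (v + 1) ∣ x₁.val := ⟨w, by rw [hu, hw]; ring⟩
        rw [padicValNat_dvd_iff_le hxval] at hdd
        omega
      have hucop : Nat.Coprime u (p ^ a) :=
        ((hp.coprime_iff_not_dvd.2 hpu).symm).pow_right a
      set uu := ZMod.unitOfCoprime u hucop with huu
      set iv := ((uu⁻¹ : (ZMod (p ^ a))ˣ) : ZMod (p ^ a)) with hiv
      set q := x₁.val / p ^ (v + b) with hq
      set rn := x₁.val % p ^ (v + b) with hrn
      set t := ((- (q : ZMod (p ^ a))) * iv).val with ht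
      have hrlt : rn < p ^ (v + b) := Nat.mod_lt _ (pow_pos hp.pos _)
      have hrlta : rn < p ^ a := lt_of_lt_of_le hrlt (Nat.pow_le_pow_right hp.one_le hcase.le)
      have hrval : ((rn : ℕ) : ZMod (p ^ a)).val = rn := ZMod.val_natCast_of_lt hrlta
      have hrn0 : rn ≠ 0 := by
        intro hz
        have hdd : p ^ (v + b) ∣ x₁.val := Nat.dvd_of_mod_eq_zero hz
        rw [padicValNat_dvd_iff_le hxval] at hdd
        omega
      have hrv : padicValNat p rn = v := by
        refine padic_transfer hp hxval rfl hrn0 ?_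
        exact (Nat.mod_modEq x₁.val (p ^ (v + b))).of_dvd (pow_dvd_pow p (by omega))
      refine ⟨((rn : ℕ) : ZMod (p ^ a)), 1 + p ^ b * t, ⟨?_, ?_⟩, ?_, ?_, ?_⟩
      · rw [hrval]
        exact (Nat.dvd_mod_iff (dvd_pow_self p (by omega : v + b ≠ 0))).2 hx₁
      · rw [hrval, hrv]
        exact hrlt
      · intro hd
        have hmul : p ∣ p ^ b * t := dvd_mul_of_dvd_left (dvd_pow_self p (by omega)) t
        have h1 : p ∣ 1 := by
          have := Nat.dvd_sub hd hmul
          rwa [Nat.add_sub_cancel] at this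
        exact hp.one_lt.ne' (Nat.dvd_one.mp h1)
      · exact ((Nat.modEq_iff_dvd' (by omega)).mpr ⟨t, by omega⟩).symm
      · -- the computation
        have hx2 : x₁ = ((p ^ v * u : ℕ) : ZMod (p ^ a)) := by
          rw [← hu]; exact (ZMod.natCast_rightInverse x₁).symm
        have htcast : ((t : ℕ) : ZMod (p ^ a)) = (-(q : ZMod (p ^ a))) * iv :=
          ZMod.natCast_rightInverse _
        have huval : ((uu : (ZMod (p ^ a))ˣ) : ZMod (p ^ a)) = (u : ZMod (p ^ a)) :=
          ZMod.coe_unitOfCoprime u hucop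
        have hinvu : iv * (u : ZMod (p ^ a)) = 1 := by
          rw [hiv, ← huval, ← Units.val_mul]
          simp
        have hinvx : iv * x₁ = ((p ^ v : ℕ) : ZMod (p ^ a)) := by
          rw [hx2]
          push_cast
          rw [← mul_assoc, mul_comm iv, mul_assoc, hinvu, mul_one]
        have key : x₁ = ((p ^ (v + b) * q + rn : ℕ) : ZMod (p ^ a)) := by
          rw [Nat.div_add_mod]
          exact (ZMod.natCast_rightInverse x₁).symm
        have hrcast : ((rn : ℕ) : ZMod (p ^ a)) = x₁ - ((p ^ (v + b) : ℕ) : ZMod (p ^ a)) * (q : ZMod (p ^ a)) := by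
          rw [key]
          push_cast
          ring
        push_cast
        rw [htcast]
        have step : ((1 : ZMod (p ^ a)) + (p : ZMod (p ^ a)) ^ b * (-(q : ZMod (p ^ a)) * iv)) * x₁
            = x₁ - (p : ZMod (p ^ a)) ^ b * (q : ZMod (p ^ a)) * (iv * x₁) := by ring
        rw [step, hinvx, hrcast]
        push_cast [pow_add]
        ring
end Canon
section CSet

open Subgroup Multiplicative

variable {p a b : ℕ}

def CSet (p a b : ℕ) : Set (MM p a b) :=
  (fun y : ZMod (p ^ b) => Egen 1 y) '' Set.univ ∪
  (fun x : ZMod (p ^ a) => Egen x 1) '' {x | Canon2 p a b x}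

variable (hp : p.Prime) (hab : b ≤ a) (hb : 1 ≤ b)
include hp hab hb

lemma val_one_a : (1 : ZMod (p ^ a)).val = 1 := by
  haveI : Fact (1 < p ^ a) := ⟨onelt_a hp hab hb⟩
  exact ZMod.val_one _

lemma val_one_b : (1 : ZMod (p ^ b)).val = 1 := by
  haveI : Fact (1 < p ^ b) := ⟨onelt_b hp hab hb⟩
  exact ZMod.val_one _

lemma CSet_sub_Sgen : CSet p a b ⊆ {g : MM p a b | ¬ ∃ z, z ^ p = g} := by
  rintro g (⟨y, -, rfl⟩ | ⟨x, hx, rfl⟩) hz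
  · have h1 := ((pth_power_iff hp hab hb 1 y).mp hz).1
    rw [val_one_a hp hab hb] at h1
    exact hp.one_lt.ne' (Nat.dvd_one.mp h1)
  · have h1 := ((pth_power_iff hp hab hb x 1).mp hz).2
    rw [val_one_b hp hab hb] at h1
    exact hp.one_lt.ne' (Nat.dvd_one.mp h1)

lemma cast_eq_one_of_modeq {n : ℕ} (hn : n ≡ 1 [MOD p ^ b]) : (n : ZMod (p ^ b)) = 1 := by
  have := (ZMod.natCast_eq_natCast_iff n 1 (p ^ b)).mpr hn
  simpa using this

lemma injOn_zpowers_CSet :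
    Set.InjOn (fun g : MM p a b => Subgroup.zpowers g) (CSet p a b) := by
  haveI : NeZero (p ^ a) := NeZa hp hab hb
  haveI : NeZero (p ^ b) := NeZb hp hab hb
  have key12 : ∀ (y : ZMod (p ^ b)) (x' : ZMod (p ^ a)), Canon2 p a b x' →
      Subgroup.zpowers (Egen 1 y : MM p a b) = Subgroup.zpowers (Egen x' 1) → False := by
    intro y x' hx' hzp
    obtain ⟨m, hm⟩ := exists_pow_eq_of_mem_zpowers
      (show (Egen 1 y : MM p a b) ∈ zpowers (Egen x' 1) from hzp.symm ▸ mem_zpowers _)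
    rw [Egen_pow, Egen_inj] at hm
    have h1 : p ∣ ((m : ZMod (p ^ a)) * x').val :=
      dvd_val_mul_right hp (dvd_pow_self p (by omega : a ≠ 0)) hx'.1 _
    rw [hm.1, val_one_a hp hab hb] at h1
    exact hp.one_lt.ne' (Nat.dvd_one.mp h1)
  rintro g (⟨y, -, rfl⟩ | ⟨x, hx, rfl⟩) g' (⟨y', -, rfl⟩ | ⟨x', hx', rfl⟩) hzp
  · -- C1 C1
    have e1 : Subgroup.zpowers (Egen 1 y : MM p a b) = Subgroup.zpowers (Egen 1 y') := hzp
    obtain ⟨n, hn⟩ := exists_pow_eq_of_mem_zpowers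
      (show (Egen 1 y' : MM p a b) ∈ zpowers (Egen 1 y) from e1 ▸ mem_zpowers _)
    rw [Egen_pow, Egen_inj] at hn
    have h1 : (n : ZMod (p ^ a)) = ((1 : ℕ) : ZMod (p ^ a)) := by
      have := hn.1
      rw [mul_one] at this
      rw [this, Nat.cast_one]
    have h2 : n ≡ 1 [MOD p ^ b] :=
      ((ZMod.natCast_eq_natCast_iff _ _ _).mp h1).of_dvd (pow_dvd_pow p hab)
    have h3 : (n : ZMod (p ^ b)) = 1 := cast_eq_one_of_modeq hp hab hb h2
    have h4 : y' = y := by rw [← hn.2, h3, one_mul]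
    rw [h4]
  · exact absurd hzp (fun h => key12 y x' hx' h)
  · exact absurd hzp.symm (fun h => key12 y' x hx h)
  · -- C2 C2
    have e1 : Subgroup.zpowers (Egen x 1 : MM p a b) = Subgroup.zpowers (Egen x' 1) := hzp
    obtain ⟨n, hn⟩ := exists_pow_eq_of_mem_zpowers
      (show (Egen x' 1 : MM p a b) ∈ zpowers (Egen x 1) from e1 ▸ mem_zpowers _)
    rw [Egen_pow, Egen_inj] at hn
    have h1 : (n : ZMod (p ^ b)) = ((1 : ℕ) : ZMod (p ^ b)) := by
      have := hn.2
      rw [mul_one] at this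
      rw [this, Nat.cast_one]
    have h2 : n ≡ 1 [MOD p ^ b] := (ZMod.natCast_eq_natCast_iff _ _ _).mp h1
    have h4 : x = x' := canon_unique hp hab hb hx hx' h2 hn.1
    rw [h4]

end CSet
section Coverage

open Subgroup Multiplicative

variable {p : ℕ}

lemma exists_nat_inverse (hp : p.Prime) {k : ℕ} (hk : k ≠ 0) {x : ZMod (p ^ k)}
    (hx : ¬ p ∣ x.val) : ∃ m : ℕ, ¬ p ∣ m ∧ (m : ZMod (p ^ k)) * x = 1 := by
  haveI : NeZero (p ^ k) := ⟨(pow_pos hp.pos k).ne'⟩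
  haveI : Fact (1 < p ^ k) := ⟨Nat.one_lt_pow hk hp.one_lt⟩
  have hxcop : Nat.Coprime x.val (p ^ k) :=
    ((hp.coprime_iff_not_dvd.2 hx).symm).pow_right k
  set w := ZMod.unitOfCoprime x.val hxcop with hw
  set m := ((w⁻¹ : (ZMod (p ^ k))ˣ) : ZMod (p ^ k)).val with hm
  have hmcast : (m : ZMod (p ^ k)) = ((w⁻¹ : (ZMod (p ^ k))ˣ) : ZMod (p ^ k)) :=
    ZMod.natCast_rightInverse _
  have hwx : ((w : (ZMod (p ^ k))ˣ) : ZMod (p ^ k)) = x := by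
    rw [hw, ZMod.coe_unitOfCoprime]
    exact ZMod.natCast_rightInverse x
  have hmx : (m : ZMod (p ^ k)) * x = 1 := by
    rw [hmcast, ← hwx, ← Units.val_mul]
    simp
  refine ⟨m, ?_, hmx⟩
  have := not_dvd_val_of_mul_eq_one hp (inferInstance) (dvd_pow_self p hk) hmx
  rwa [hmcast] at this

variable {a b : ℕ} (hp : p.Prime) (hab : b ≤ a) (hb : 1 ≤ b)
include hp hab hb

lemma zpowers_CSet_eq :
    (fun g : MM p a b => Subgroup.zpowers g) '' {g : MM p a b | ¬ ∃ z, z ^ p = g} =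
      (fun g : MM p a b => Subgroup.zpowers g) '' CSet p a b := by
  haveI : NeZero (p ^ a) := NeZa hp hab hb
  haveI : NeZero (p ^ b) := NeZb hp hab hb
  haveI hfin : Fintype (MM p a b) := by infer_instance
  apply Set.Subset.antisymm
  · rintro _ ⟨g, hg, rfl⟩
    obtain ⟨x, y, rfl⟩ := Egen_surj g
    have hg' : ¬ (p ∣ x.val ∧ p ∣ y.val) := fun hc => hg ((pth_power_iff hp hab hb x y).mpr hc)
    by_cases hx : p ∣ x.val
    · have hy : ¬ p ∣ y.val := fun hy => hg' ⟨hx, hy⟩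
      obtain ⟨m, hpm, hmy⟩ := exists_nat_inverse hp (by omega : b ≠ 0) hy
      have hx₁ : p ∣ ((m : ZMod (p ^ a)) * x).val :=
        dvd_val_mul_right hp (dvd_pow_self p (by omega : a ≠ 0)) hx _
      obtain ⟨r, n, hcanon, hpn, hnb, hnx⟩ := exists_canon hp hab hb hx₁
      have hmn : ¬ p ∣ m * n := fun hd => ((Nat.Prime.dvd_mul hp).mp hd).elim hpm hpn
      have hpow : (Egen x y : MM p a b) ^ (m * n) = Egen r 1 := by
        rw [Egen_pow, Egen_inj]
        constructor
        · push_cast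
          rw [mul_comm (m : ZMod (p ^ a)) (n : ZMod (p ^ a)), mul_assoc]
          exact hnx
        · push_cast
          rw [mul_comm (m : ZMod (p ^ b)) (n : ZMod (p ^ b)), mul_assoc, hmy, mul_one]
          exact cast_eq_one_of_modeq hp hab hb hnb
      refine ⟨Egen r 1, Or.inr ⟨r, hcanon, rfl⟩, ?_⟩
      show Subgroup.zpowers (Egen r 1 : MM p a b) = Subgroup.zpowers (Egen x y)
      rw [← hpow]
      exact @zpowers_pow_eq (MM p a b) _ hfin p hp (hord_MM hp hab hb) _ _ hmn
    · obtain ⟨m, hpm, hmx⟩ := exists_nat_inverse hp (by omega : a ≠ 0) hx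
      have hpow : (Egen x y : MM p a b) ^ m = Egen 1 ((m : ZMod (p ^ b)) * y) := by
        rw [Egen_pow, Egen_inj]
        exact ⟨hmx, rfl⟩
      refine ⟨Egen 1 ((m : ZMod (p ^ b)) * y), Or.inl ⟨(m : ZMod (p ^ b)) * y, trivial, rfl⟩, ?_⟩
      show Subgroup.zpowers (Egen 1 ((m : ZMod (p ^ b)) * y) : MM p a b)
        = Subgroup.zpowers (Egen x y)
      rw [← hpow]
      exact @zpowers_pow_eq (MM p a b) _ hfin p hp (hord_MM hp hab hb) _ _ hpm
  · rintro _ ⟨g, hg, rfl⟩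
    exact ⟨g, CSet_sub_Sgen hp hab hb hg, rfl⟩

end Coverage
section Counting

variable {p b : ℕ}

lemma count_canon (hp : p.Prime) (hb : 1 ≤ b) :
    ∀ a, b ≤ a →
      ((Finset.range (p ^ a)).filter
        (fun n => p ∣ n ∧ n < p ^ (padicValNat p n + b))).card
      = p ^ (b - 1) + (a - b) * (p ^ (b - 1) * (p - 1)) := by
  haveI : Fact p.Prime := ⟨hp⟩
  intro a hba
  induction a, hba using Nat.le_induction with
  | base =>
      have himg : (Finset.range (p ^ b)).filter
          (fun n => p ∣ n ∧ n < p ^ (padicValNat p n + b))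
          = (Finset.range (p ^ (b - 1))).image (fun m => p * m) := by
        ext n
        simp only [Finset.mem_filter, Finset.mem_range, Finset.mem_image]
        constructor
        · rintro ⟨hlt, ⟨m, rfl⟩, -⟩
          refine ⟨m, ?_, rfl⟩
          have h2 : p * m < p * p ^ (b - 1) := by
            calc p * m < p ^ b := hlt
            _ = p * p ^ (b - 1) := by
                conv_lhs => rw [show b = 1 + (b - 1) by omega]
                rw [pow_add, pow_one]
          exact lt_of_mul_lt_mul_left h2 (Nat.zero_le p)
        · rintro ⟨m, hm, rfl⟩
          have h1 : p * m < p ^ b := by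
            calc p * m < p * p ^ (b - 1) := (Nat.mul_lt_mul_left hp.pos).mpr hm
            _ = p ^ b := by
                conv_rhs => rw [show b = 1 + (b - 1) by omega]
                rw [pow_add, pow_one]
          exact ⟨h1, ⟨m, rfl⟩, lt_of_lt_of_le h1 (Nat.pow_le_pow_right hp.one_le (by omega))⟩
      rw [himg, Finset.card_image_of_injective _ (fun u v huv => by
        exact Nat.eq_of_mul_eq_mul_left hp.pos huv), Finset.card_range]
      rw [Nat.sub_self]
      simp
  | succ a ha ih =>
      have hsplit : Finset.range (p ^ (a + 1)) =
          Finset.range (p ^ a) ∪ Finset.Ico (p ^ a) (p ^ (a + 1)) := by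
        rw [Finset.range_eq_Ico, Finset.range_eq_Ico]
        exact (Finset.Ico_union_Ico_eq_Ico (Nat.zero_le _)
          (Nat.pow_le_pow_right hp.one_le (by omega : a ≤ a + 1))).symm
      have hdisj : Disjoint ((Finset.range (p ^ a)).filter
            (fun n => p ∣ n ∧ n < p ^ (padicValNat p n + b)))
          ((Finset.Ico (p ^ a) (p ^ (a + 1))).filter
            (fun n => p ∣ n ∧ n < p ^ (padicValNat p n + b))) := by
        apply Finset.disjoint_filter_filter
        rw [Finset.range_eq_Ico]
        exact Finset.Ico_disjoint_Ico_consecutive 0 (p ^ a) (p ^ (a + 1))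
      have hexp : p ^ (a - b + 1) * p ^ (b - 1) = p ^ a := by
        rw [← pow_add]; congr 1; omega
      have hexp2 : p ^ (a - b + 1) * p ^ b = p ^ (a + 1) := by
        rw [← pow_add]; congr 1; omega
      have himg : (Finset.Ico (p ^ a) (p ^ (a + 1))).filter
            (fun n => p ∣ n ∧ n < p ^ (padicValNat p n + b))
          = (Finset.Ico (p ^ (b - 1)) (p ^ b)).image (fun m => p ^ (a - b + 1) * m) := by
        ext n
        simp only [Finset.mem_filter, Finset.mem_Ico, Finset.mem_image]
        constructor
        · rintro ⟨⟨hge, hlt⟩, -, hcan⟩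
          have hn0 : n ≠ 0 := by
            have := pow_pos hp.pos a
            omega
          set v := padicValNat p n with hv
          have hva : a + 1 ≤ v + b := by
            by_contra hcon
            have : p ^ (v + b) ≤ p ^ a := Nat.pow_le_pow_right hp.one_le (by omega)
            omega
          have hdvd : p ^ (a - b + 1) ∣ n := by
            refine dvd_trans (pow_dvd_pow p (by omega : a - b + 1 ≤ v)) ?_
            exact pow_padicValNat_dvd
          obtain ⟨m, rfl⟩ := hdvd
          refine ⟨m, ⟨?_, ?_⟩, rfl⟩
          · rw [← hexp] at hge
            exact Nat.le_of_mul_le_mul_left hge (pow_pos hp.pos _)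
          · rw [← hexp2] at hlt
            exact Nat.lt_of_mul_lt_mul_left hlt
        · rintro ⟨m, ⟨hge, hlt⟩, rfl⟩
          have hm0 : m ≠ 0 := by
            have := pow_pos hp.pos (b - 1)
            omega
          have hvm : padicValNat p (p ^ (a - b + 1) * m)
              = (a - b + 1) + padicValNat p m := by
            rw [padicValNat.mul (pow_ne_zero _ hp.pos.ne') hm0, padicValNat.prime_pow]
          refine ⟨⟨?_, ?_⟩, ?_, ?_⟩
          · calc p ^ a = p ^ (a - b + 1) * p ^ (b - 1) := hexp.symm
            _ ≤ p ^ (a - b + 1) * m := Nat.mul_le_mul_left _ hge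
          · calc p ^ (a - b + 1) * m < p ^ (a - b + 1) * p ^ b :=
                (Nat.mul_lt_mul_left (pow_pos hp.pos _)).mpr hlt
            _ = p ^ (a + 1) := hexp2
          · exact dvd_mul_of_dvd_left (dvd_pow_self p (by omega)) m
          · rw [hvm]
            calc p ^ (a - b + 1) * m < p ^ (a - b + 1) * p ^ (padicValNat p m + b) := by
                  refine (Nat.mul_lt_mul_left (pow_pos hp.pos _)).mpr ?_
                  exact lt_of_lt_of_le hlt (Nat.pow_le_pow_right hp.one_le (by omega))
            _ = p ^ (a - b + 1 + padicValNat p m + b) := by rw [← pow_add]; congr 1; omega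
      rw [hsplit, Finset.filter_union, Finset.card_union_of_disjoint hdisj, ih, himg,
        Finset.card_image_of_injective _
          (fun u v huv => Nat.eq_of_mul_eq_mul_left (pow_pos hp.pos _) huv),
        Nat.card_Ico]
      have hcard : p ^ b - p ^ (b - 1) = p ^ (b - 1) * (p - 1) := by
        rw [Nat.mul_sub, mul_one, mul_comm]
        congr 2
        rw [← pow_succ']
        congr 1
        omega
      rw [hcard]
      have h1 : a + 1 - b = (a - b) + 1 := by omega
      rw [h1]
      ring

end Counting
section Final

open Subgroup Multiplicative

variable {p a b : ℕ} (hp : p.Prime) (hab : b ≤ a) (hb : 1 ≤ b)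
include hp hab hb

lemma ncard_canonSet :
    {x : ZMod (p ^ a) | Canon2 p a b x}.ncard
      = p ^ (b - 1) + (a - b) * (p ^ (b - 1) * (p - 1)) := by
  haveI : NeZero (p ^ a) := NeZa hp hab hb
  have himg : (ZMod.val '' {x : ZMod (p ^ a) | Canon2 p a b x})
      = ↑((Finset.range (p ^ a)).filter
          (fun n => p ∣ n ∧ n < p ^ (padicValNat p n + b))) := by
    ext n
    simp only [Set.mem_image, Finset.coe_filter, Finset.mem_range, Set.mem_setOf_eq]
    constructor
    · rintro ⟨x, hx, rfl⟩
      exact ⟨ZMod.val_lt x, hx.1, hx.2⟩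
    · rintro ⟨hlt, h1, h2⟩
      refine ⟨(n : ZMod (p ^ a)), ?_, ZMod.val_natCast_of_lt hlt⟩
      constructor <;> rw [ZMod.val_natCast_of_lt hlt] <;> assumption
  have h2 := Set.ncard_image_of_injective {x : ZMod (p ^ a) | Canon2 p a b x}
    (ZMod.val_injective (p ^ a))
  rw [himg] at h2
  rw [← h2, Set.ncard_coe_finset, count_canon hp hb a hab]

lemma ncard_CSet : (CSet p a b).ncard
    = p ^ b + (p ^ (b - 1) + (a - b) * (p ^ (b - 1) * (p - 1))) := by
  haveI : NeZero (p ^ a) := NeZa hp hab hb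
  haveI : NeZero (p ^ b) := NeZb hp hab hb
  have hdisj : Disjoint ((fun y : ZMod (p ^ b) => (Egen 1 y : MM p a b)) '' Set.univ)
      ((fun x : ZMod (p ^ a) => (Egen x 1 : MM p a b)) '' {x | Canon2 p a b x}) := by
    rw [Set.disjoint_left]
    rintro g ⟨y, -, rfl⟩ ⟨x, hx, heq⟩
    have h1 := (Egen_inj.mp heq).1
    rw [h1] at hx
    have h2 := hx.1
    rw [val_one_a hp hab hb] at h2
    exact hp.one_lt.ne' (Nat.dvd_one.mp h2)
  rw [CSet, Set.ncard_union_eq hdisj (Set.toFinite _) (Set.toFinite _)]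
  congr 1
  · rw [Set.ncard_image_of_injective _ (fun y1 y2 h => (Egen_inj.mp h).2),
      Set.ncard_univ, Nat.card_zmod]
  · rw [Set.ncard_image_of_injective _ (fun x1 x2 h => (Egen_inj.mp h).1)]
    exact ncard_canonSet hp hab hb

end Final

theorem stmt1 {G : Type*} [Group G] {p a b : ℕ} (hp : p.Prime)
    (hab : a ≥ b) (hb : 1 ≤ b)
    (e : G ≃* Multiplicative (ZMod (p ^ a)) × Multiplicative (ZMod (p ^ b))) :
    {H : Subgroup G | IsMaximalCyclic H}.ncard =
      p ^ (b - 1) * ((a - b) * (p - 1) + p + 1) := by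
  haveI : NeZero (p ^ a) := NeZa hp hab hb
  haveI : NeZero (p ^ b) := NeZb hp hab hb
  haveI hfin : Fintype (MM p a b) := by infer_instance
  haveI : Fact (1 < p ^ a) := ⟨onelt_a hp hab hb⟩
  haveI hnt : Nontrivial (MM p a b) := by
    refine ⟨⟨Egen 1 0, Egen 0 0, fun h => ?_⟩⟩
    exact one_ne_zero (Egen_inj.mp h).1
  rw [ncard_maxCyclic_congr e]
  rw [show {H : Subgroup (MM p a b) | IsMaximalCyclic H}
      = (fun g : MM p a b => Subgroup.zpowers g) '' {g : MM p a b | ¬ ∃ x, x ^ p = g} from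
    @maxCyclic_set_eq (MM p a b) _ hfin p hp (hord_MM hp hab hb) hnt]
  rw [zpowers_CSet_eq hp hab hb]
  rw [Set.ncard_image_of_injOn (injOn_zpowers_CSet hp hab hb)]
  rw [ncard_CSet hp hab hb]
  have hpb : p ^ (b - 1) * p = p ^ b := by
    rw [← pow_succ]
    congr 1
    omega
  rw [Nat.mul_add, Nat.mul_add, mul_one, hpb]
  ring
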